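/- Let p be an odd prime and let n, t be positive integers with n ≡ t (mod p−1). Then in ℚ_p, l_p(-n, ω^t) := Σ_{a=1}^{p-1} (-1)^a ⟨a⟩^{n} ω(a)^t Σ_{j=0}^{n} C(n,j)(p/a)^j E_j = (1 − p^n) E_n. -/

import Mathlib

/-- The Euler numbers `E₀ = 1`, `∑_{k=0}^{n} C(n,k) Eₖ + Eₙ = 0` for `n ≥ 1`. -/
noncomputable def eulerNumber : ℕ → ℚ
  | 0 => 1
  | n + 1 => (-1/2) * ∑ k ∈ (Finset.range (n+1)).attach,
      ((n+1).choose k.1 : ℚ) * eulerNumber k.1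
  decreasing_by exact Finset.mem_range.mp k.2

open Finset

lemma euler_def (n : ℕ) : eulerNumber (n+1)
    = (-1/2) * ∑ k ∈ Finset.range (n+1), ((n+1).choose k : ℚ) * eulerNumber k := by
  rw [eulerNumber]
  rw [← Finset.sum_attach (Finset.range (n+1)) (fun k => ((n+1).choose k : ℚ) * eulerNumber k)]

lemma euler_sum (m : ℕ) (hm : 0 < m) :
    ∑ j ∈ Finset.range m, (m.choose j : ℚ) * eulerNumber j = -2 * eulerNumber m := by
  obtain ⟨k, rfl⟩ := Nat.exists_eq_add_of_le hm
  rw [Nat.add_comm 1 k] at *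
  rw [euler_def k]
  ring

lemma euler_sum' (m : ℕ) (hm : 0 < m) :
    ∑ j ∈ Finset.range (m+1), (m.choose j : ℚ) * eulerNumber j = - eulerNumber m := by
  rw [Finset.sum_range_succ, euler_sum m hm, Nat.choose_self]
  push_cast; ring

lemma choose_helper (k i j : ℕ) :
    (k.choose j) * ((k-j).choose i) = (k.choose i) * ((k-i).choose j) := by
  by_cases h : i + j ≤ k
  · have h1 := Nat.choose_mul (n := k) (by omega : j ≤ k - i)
    rw [Nat.choose_symm (by omega : i ≤ k)] at h1
    have h2 : k - i - j = (k - j) - i := by omega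
    rw [h2, Nat.choose_symm (by omega : i ≤ k - j)] at h1
    exact h1.symm
  · by_cases hik : i ≤ k
    · by_cases hjk : j ≤ k
      · rw [Nat.choose_eq_zero_of_lt (by omega : k - j < i),
          Nat.choose_eq_zero_of_lt (by omega : k - i < j)]
        simp
      · rw [Nat.choose_eq_zero_of_lt (by omega : k < j),
          Nat.choose_eq_zero_of_lt (by omega : k - i < j)]
        simp
    · rw [Nat.choose_eq_zero_of_lt (by omega : k < i),
        Nat.choose_eq_zero_of_lt (by omega : k - j < i)]
      simp

lemma binom_ext (m k : ℕ) (hmk : m ≤ k) (x : ℚ) :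
    (x+1)^m = ∑ i ∈ Finset.range (k+1), (m.choose i : ℚ) * x^i := by
  rw [add_pow]
  rw [Finset.sum_subset (Finset.range_subset_range.mpr (by omega) : Finset.range (m+1) ⊆ Finset.range (k+1))
    (fun i hi hni => by
      rw [Nat.choose_eq_zero_of_lt (by simp only [Finset.mem_range, not_lt] at hi hni; omega)]
      simp)]
  exact Finset.sum_congr rfl fun i _ => by ring

lemma funceq (k : ℕ) (x : ℚ) :
    ∑ j ∈ Finset.range (k+1), (k.choose j : ℚ) * eulerNumber j * ((x+1)^(k-j) + x^(k-j))
      = 2 * x^k := by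
  have key : ∀ j ∈ Finset.range (k+1),
      (k.choose j : ℚ) * eulerNumber j * ((x+1)^(k-j) + x^(k-j))
      = (∑ i ∈ Finset.range (k+1),
          (k.choose j : ℚ) * eulerNumber j * (((k-j).choose i : ℚ) * x^i))
        + (k.choose j : ℚ) * eulerNumber j * x^(k-j) := by
    intro j hj
    rw [binom_ext (k-j) k (Nat.sub_le _ _) x, mul_add, Finset.mul_sum]
  rw [Finset.sum_congr rfl key, Finset.sum_add_distrib]
  have refl2 : ∑ j ∈ Finset.range (k+1), (k.choose j : ℚ) * eulerNumber j * x^(k-j)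
      = ∑ i ∈ Finset.range (k+1), (k.choose i : ℚ) * eulerNumber (k-i) * x^i := by
    rw [← Finset.sum_range_reflect (fun i => (k.choose i : ℚ) * eulerNumber (k-i) * x^i) (k+1)]
    apply Finset.sum_congr rfl
    intro j hj
    simp only [Finset.mem_range] at hj
    have h1 : k + 1 - 1 - j = k - j := by omega
    have h2 : k - (k - j) = j := by omega
    rw [h1, h2, Nat.choose_symm (by omega : j ≤ k)]
  have swap : ∑ j ∈ Finset.range (k+1), ∑ i ∈ Finset.range (k+1),
        (k.choose j : ℚ) * eulerNumber j * (((k-j).choose i : ℚ) * x^i)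
      = ∑ i ∈ Finset.range (k+1), (k.choose i : ℚ) * x^i *
          ∑ j ∈ Finset.range (k-i+1), ((k-i).choose j : ℚ) * eulerNumber j := by
    rw [Finset.sum_comm]
    apply Finset.sum_congr rfl
    intro i hi
    rw [Finset.mul_sum,
      Finset.sum_subset (Finset.range_subset_range.mpr (by omega) : Finset.range (k-i+1) ⊆ Finset.range (k+1))
      (fun j hj hnj => by
        rw [Nat.choose_eq_zero_of_lt (by simp only [Finset.mem_range, not_lt] at hj hnj; omega : k - i < j)]
        simp)]
    apply Finset.sum_congr rfl
    intro j hj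
    have hc : ((k.choose j : ℚ)) * ((k-j).choose i : ℚ) = (k.choose i : ℚ) * ((k-i).choose j : ℚ) := by
      exact_mod_cast congrArg (Nat.cast : ℕ → ℚ) (choose_helper k i j)
    calc (k.choose j : ℚ) * eulerNumber j * (((k-j).choose i : ℚ) * x^i)
        = ((k.choose j : ℚ)) * ((k-j).choose i : ℚ) * (eulerNumber j * x^i) := by ring
      _ = (k.choose i : ℚ) * ((k-i).choose j : ℚ) * (eulerNumber j * x^i) := by rw [hc]
      _ = (k.choose i : ℚ) * x^i * (((k-i).choose j : ℚ) * eulerNumber j) := by ring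
  rw [swap, refl2, ← Finset.sum_add_distrib]
  rw [Finset.sum_eq_single_of_mem k (Finset.self_mem_range_succ k)
    (fun i hi hik => by
      have hik' : i < k := by simp only [Finset.mem_range] at hi; omega
      rw [euler_sum' (k-i) (by omega)]
      ring)]
  have h0 : k - k = 0 := by omega
  rw [h0]
  have he0 : eulerNumber 0 = 1 := by rw [eulerNumber]
  simp [he0]
  ring

lemma altsum (k N : ℕ) :
    2 * ∑ a ∈ Finset.range N, (-1:ℚ)^a * (a:ℚ)^k
      = eulerNumber k - (-1:ℚ)^N *
          ∑ j ∈ Finset.range (k+1), (k.choose j : ℚ) * eulerNumber j * (N:ℚ)^(k-j) := by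
  induction N with
  | zero =>
    simp only [Finset.range_zero, Finset.sum_empty, mul_zero, pow_zero, one_mul]
    rw [Finset.sum_eq_single_of_mem k (Finset.self_mem_range_succ k)
      (fun j hj hjk => by
        rw [show ((0:ℕ):ℚ) = 0 from rfl, zero_pow (by simp only [Finset.mem_range] at hj; omega : k - j ≠ 0)]
        ring)]
    simp
  | succ N ih =>
    rw [Finset.sum_range_succ, mul_add, ih]
    have hfe := funceq k (N:ℚ)
    rw [Finset.sum_congr rfl (fun j _ => mul_add ((k.choose j : ℚ) * eulerNumber j)
      (((N:ℚ)+1)^(k-j)) (((N:ℚ))^(k-j))), Finset.sum_add_distrib] at hfe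
    push_cast at hfe ⊢
    linear_combination (-(-1:ℚ)^N) * hfe

lemma main_rat (m n : ℕ) (hm : Odd m) :
    ∑ a ∈ Finset.range m, (-1:ℚ)^a *
      ∑ j ∈ Finset.range (n+1), (n.choose j : ℚ) * (m:ℚ)^j * (a:ℚ)^(n-j) * eulerNumber j
    = eulerNumber n := by
  have hm1 : ((-1:ℚ))^m = -1 := Odd.neg_one_pow hm
  have hterm : ∀ i ∈ Finset.range (n+1), ∀ j ∈ Finset.range (n+1),
      (n.choose j : ℚ) * (m:ℚ)^j * eulerNumber j *
        (((n-j).choose i : ℚ) * eulerNumber i * (m:ℚ)^(n-j-i))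
      = (n.choose i : ℚ) * eulerNumber i * (m:ℚ)^(n-i) *
          (((n-i).choose j : ℚ) * eulerNumber j) := by
    intro i hi j hj
    simp only [Finset.mem_range] at hi hj
    by_cases hij : i + j ≤ n
    · have hc : ((n.choose j : ℚ)) * ((n-j).choose i : ℚ)
          = (n.choose i : ℚ) * ((n-i).choose j : ℚ) := by
        exact_mod_cast congrArg (Nat.cast : ℕ → ℚ) (choose_helper n i j)
      have hexp : (m:ℚ)^j * (m:ℚ)^(n-j-i) = (m:ℚ)^(n-i) := by
        rw [← pow_add]; congr 1; omega
      calc (n.choose j : ℚ) * (m:ℚ)^j * eulerNumber j *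
            (((n-j).choose i : ℚ) * eulerNumber i * (m:ℚ)^(n-j-i))
          = ((n.choose j : ℚ) * ((n-j).choose i : ℚ)) * (eulerNumber j * eulerNumber i)
              * ((m:ℚ)^j * (m:ℚ)^(n-j-i)) := by ring
        _ = ((n.choose i : ℚ) * ((n-i).choose j : ℚ)) * (eulerNumber j * eulerNumber i)
              * (m:ℚ)^(n-i) := by rw [hc, hexp]
        _ = _ := by ring
    · rw [Nat.choose_eq_zero_of_lt (by omega : n - j < i),
        Nat.choose_eq_zero_of_lt (by omega : n - i < j)]
      push_cast; ring
  have key : 2 * (∑ a ∈ Finset.range m, (-1:ℚ)^a *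
      ∑ j ∈ Finset.range (n+1), (n.choose j : ℚ) * (m:ℚ)^j * (a:ℚ)^(n-j) * eulerNumber j)
      = 2 * eulerNumber n := by
    calc 2 * (∑ a ∈ Finset.range m, (-1:ℚ)^a *
        ∑ j ∈ Finset.range (n+1), (n.choose j : ℚ) * (m:ℚ)^j * (a:ℚ)^(n-j) * eulerNumber j)
        = ∑ j ∈ Finset.range (n+1), ((n.choose j : ℚ) * (m:ℚ)^j * eulerNumber j) *
            (2 * ∑ a ∈ Finset.range m, (-1:ℚ)^a * (a:ℚ)^(n-j)) := by
          rw [Finset.mul_sum]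
          rw [Finset.sum_congr rfl (fun a _ => by
            rw [Finset.mul_sum, Finset.mul_sum] :
            ∀ a ∈ Finset.range m, 2 * ((-1:ℚ)^a *
              ∑ j ∈ Finset.range (n+1), (n.choose j : ℚ) * (m:ℚ)^j * (a:ℚ)^(n-j) * eulerNumber j)
            = ∑ j ∈ Finset.range (n+1),
                2 * ((-1:ℚ)^a * ((n.choose j : ℚ) * (m:ℚ)^j * (a:ℚ)^(n-j) * eulerNumber j)))]
          rw [Finset.sum_comm]
          apply Finset.sum_congr rfl
          intro j _
          rw [Finset.mul_sum, Finset.mul_sum]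
          apply Finset.sum_congr rfl
          intro a _
          ring
      _ = ∑ j ∈ Finset.range (n+1), ((n.choose j : ℚ) * (m:ℚ)^j * eulerNumber j) *
            (eulerNumber (n-j) + ∑ i ∈ Finset.range (n-j+1),
              ((n-j).choose i : ℚ) * eulerNumber i * (m:ℚ)^(n-j-i)) := by
          apply Finset.sum_congr rfl
          intro j _
          rw [altsum (n-j) m, hm1]
          ring
      _ = (∑ j ∈ Finset.range (n+1), ((n.choose j : ℚ) * (m:ℚ)^j * eulerNumber j) *
              eulerNumber (n-j))
          + ∑ j ∈ Finset.range (n+1), ∑ i ∈ Finset.range (n+1),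
              (n.choose j : ℚ) * (m:ℚ)^j * eulerNumber j *
                (((n-j).choose i : ℚ) * eulerNumber i * (m:ℚ)^(n-j-i)) := by
          rw [← Finset.sum_add_distrib]
          apply Finset.sum_congr rfl
          intro j hj
          rw [mul_add]
          congr 1
          rw [Finset.mul_sum,
            Finset.sum_subset (Finset.range_subset_range.mpr (by omega) :
              Finset.range (n-j+1) ⊆ Finset.range (n+1))
            (fun i hi hni => by
              rw [Nat.choose_eq_zero_of_lt
                (by simp only [Finset.mem_range, not_lt] at hi hni; omega : n - j < i)]
              simp)]
      _ = (∑ i ∈ Finset.range (n+1), ((n.choose i : ℚ) * (m:ℚ)^(n-i) * eulerNumber (n-i))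
              * eulerNumber i)
          + ∑ i ∈ Finset.range (n+1), (n.choose i : ℚ) * eulerNumber i * (m:ℚ)^(n-i) *
              ∑ j ∈ Finset.range (n-i+1), ((n-i).choose j : ℚ) * eulerNumber j := by
          congr 1
          · rw [← Finset.sum_range_reflect
              (fun i => ((n.choose i : ℚ) * (m:ℚ)^(n-i) * eulerNumber (n-i)) * eulerNumber i) (n+1)]
            apply Finset.sum_congr rfl
            intro j hj
            simp only [Finset.mem_range] at hj
            have h1 : n + 1 - 1 - j = n - j := by omega
            have h2 : n - (n - j) = j := by omega
            rw [h1, h2, Nat.choose_symm (by omega : j ≤ n)]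
          · rw [Finset.sum_comm]
            apply Finset.sum_congr rfl
            intro i hi
            rw [Finset.sum_congr rfl (hterm i hi), Finset.mul_sum,
              Finset.sum_subset (Finset.range_subset_range.mpr (by omega) :
                Finset.range (n-i+1) ⊆ Finset.range (n+1))
              (fun j hj hnj => by
                rw [Nat.choose_eq_zero_of_lt
                  (by simp only [Finset.mem_range, not_lt] at hj hnj; omega : n - i < j)]
                simp)]
      _ = 2 * eulerNumber n := by
          rw [← Finset.sum_add_distrib,
            Finset.sum_eq_single_of_mem n (Finset.self_mem_range_succ n)
            (fun i hi hin => by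
              have hin' : i < n := by simp only [Finset.mem_range] at hi; omega
              rw [euler_sum' (n-i) (by omega)]
              ring)]
          have h0 : n - n = 0 := by omega
          rw [h0]
          have he0 : eulerNumber 0 = 1 := by rw [eulerNumber]
          simp [he0]
          ring
  linarith [key]

lemma main_rat' (m n : ℕ) (hm : Odd m) (hm1 : 1 < m) (hn : 0 < n) :
    ∑ a ∈ Finset.Icc 1 (m-1), (-1:ℚ)^a *
      ∑ j ∈ Finset.range (n+1), (n.choose j : ℚ) * (m:ℚ)^j * (a:ℚ)^(n-j) * eulerNumber j
    = (1 - (m:ℚ)^n) * eulerNumber n := by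
  have hins : Finset.range m = insert 0 (Finset.Icc 1 (m-1)) := by
    ext x
    simp only [Finset.mem_range, Finset.mem_insert, Finset.mem_Icc]
    omega
  have key := main_rat m n hm
  rw [hins, Finset.sum_insert (by simp)] at key
  have h0 : (-1:ℚ)^0 * ∑ j ∈ Finset.range (n+1),
      (n.choose j : ℚ) * (m:ℚ)^j * ((0:ℕ):ℚ)^(n-j) * eulerNumber j
      = (m:ℚ)^n * eulerNumber n := by
    rw [Finset.sum_eq_single_of_mem n (Finset.self_mem_range_succ n)
      (fun j hj hjn => by
        rw [show ((0:ℕ):ℚ) = 0 from rfl,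
          zero_pow (by simp only [Finset.mem_range] at hj; omega : n - j ≠ 0)]
        ring)]
    simp
  rw [h0] at key
  linarith [key]

/-- For an odd prime `p` and positive integers `n ≡ t (mod p-1)`, with `ω a` the
Teichmüller lift of `a` (the unique `(p-1)`-st root of unity `≡ a (mod p)` in `ℤ_p`)
and `⟨a⟩ = a/ω(a)`:
`l_p(-n, ω^t) = ∑_{a=1}^{p-1} (-1)^a ⟨a⟩^n ω(a)^t ∑_{j=0}^{n} C(n,j)(p/a)^j E_j
  = (1 - p^n) E_n` in `ℚ_p`. -/
theorem lp_at_neg_n (p : ℕ) [Fact p.Prime] (hp : Odd p)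
    (n t : ℕ) (hn : 0 < n) (ht : 0 < t) (hnt : n % (p - 1) = t % (p - 1))
    (ω : ℕ → ℤ_[p])
    (hω : ∀ a : ℕ, 0 < a → a < p → (ω a) ^ (p - 1) = 1 ∧ ‖ω a - (a : ℤ_[p])‖ < 1) :
    ∑ a ∈ Finset.Icc 1 (p - 1),
        (-1 : ℚ_[p]) ^ a * ((a : ℚ_[p]) / (ω a : ℚ_[p])) ^ n * ((ω a : ℚ_[p])) ^ t *
          ∑ j ∈ Finset.range (n + 1),
            (n.choose j : ℚ_[p]) * ((p : ℚ_[p]) / (a : ℚ_[p])) ^ j *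
              (eulerNumber j : ℚ_[p]) =
      (1 - (p : ℚ_[p]) ^ n) * (eulerNumber n : ℚ_[p]) := by
  have hp1 : 1 < p := (Fact.out : p.Prime).one_lt
  have key := main_rat' p n hp hp1 hn
  calc ∑ a ∈ Finset.Icc 1 (p - 1),
        (-1 : ℚ_[p]) ^ a * ((a : ℚ_[p]) / (ω a : ℚ_[p])) ^ n * ((ω a : ℚ_[p])) ^ t *
          ∑ j ∈ Finset.range (n + 1),
            (n.choose j : ℚ_[p]) * ((p : ℚ_[p]) / (a : ℚ_[p])) ^ j *
              (eulerNumber j : ℚ_[p])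
      = ∑ a ∈ Finset.Icc 1 (p - 1),
          ((((-1:ℚ)^a * ∑ j ∈ Finset.range (n+1),
            (n.choose j : ℚ) * (p:ℚ)^j * (a:ℚ)^(n-j) * eulerNumber j : ℚ)) : ℚ_[p]) := by
        apply Finset.sum_congr rfl
        intro a ha
        simp only [Finset.mem_Icc] at ha
        have ha0 : (a : ℚ_[p]) ≠ 0 := Nat.cast_ne_zero.mpr (by omega)
        set W : ℚ_[p] := ((ω a : ℤ_[p]) : ℚ_[p]) with hWdef
        have hW : W ^ (p-1) = 1 := by
          have h := (hω a (by omega) (by omega)).1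
          rw [hWdef]
          exact_mod_cast congrArg (fun z : ℤ_[p] => ((z : ℚ_[p]))) h
        have hW0 : W ≠ 0 := by
          intro h
          rw [h, zero_pow (by omega : p - 1 ≠ 0)] at hW
          exact zero_ne_one hW
        have hmod : ∀ s : ℕ, W ^ s = W ^ (s % (p-1)) := by
          intro s
          conv_lhs => rw [← Nat.div_add_mod s (p-1)]
          rw [pow_add, pow_mul, hW, one_pow, one_mul]
        have hWt : W ^ t = W ^ n := by rw [hmod t, hmod n, hnt]
        have h1 : ((a : ℚ_[p]) / W) ^ n * W ^ n = (a : ℚ_[p])^n := by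
          rw [div_pow, div_mul_cancel₀ _ (pow_ne_zero n hW0)]
        have h2 : (a : ℚ_[p])^n * ∑ j ∈ Finset.range (n + 1),
              (n.choose j : ℚ_[p]) * ((p : ℚ_[p]) / (a : ℚ_[p])) ^ j * (eulerNumber j : ℚ_[p])
            = ∑ j ∈ Finset.range (n + 1),
              (n.choose j : ℚ_[p]) * (p:ℚ_[p])^j * (a:ℚ_[p])^(n-j) * (eulerNumber j : ℚ_[p]) := by
          rw [Finset.mul_sum]
          apply Finset.sum_congr rfl
          intro j hj
          have hjn : j ≤ n := by simp only [Finset.mem_range] at hj; omega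
          have hp3 : (a:ℚ_[p])^n = (a:ℚ_[p])^(n-j) * (a:ℚ_[p])^j := by
            rw [← pow_add]; congr 1; omega
          rw [div_pow, hp3]
          field_simp
        rw [hWt, mul_assoc ((-1 : ℚ_[p]) ^ a), h1, mul_assoc, h2]
        push_cast
        ring
    _ = ((∑ a ∈ Finset.Icc 1 (p-1), ((-1:ℚ)^a * ∑ j ∈ Finset.range (n+1),
            (n.choose j : ℚ) * (p:ℚ)^j * (a:ℚ)^(n-j) * eulerNumber j) : ℚ) : ℚ_[p]) := by
        rw [Rat.cast_sum]
    _ = (((1 - (p:ℚ)^n) * eulerNumber n : ℚ) : ℚ_[p]) := by rw [key]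
    _ = (1 - (p : ℚ_[p]) ^ n) * (eulerNumber n : ℚ_[p]) := by push_cast; ring
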